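/- arXiv:1805.06703 — 2 statements merged into one kernel-verified Lean document; each statement's English description precedes it below -/
import Mathlib

section
/- Reverse Poincaré inequality for discrete super Ricci flows: Let (X,Q_t,π_t)_{t∈I} be a regular time-dependent Markov triple satisfying the gradient estimate on I: for all r₁≤r₂ in I, every solution χ of the heat equation on [r₁,r₂] and every solution σ of the adjoint heat equation on [r₁,r₂] with σ(r₂,·)∈P(X), Γ_{r₂}(σ(r₂,·),χ(r₂,·)) ≤ Γ_{r₁}(σ(r₁,·),χ(r₁,·)). Then for all s≤t in I, every μ∈P(X) and every ψ̄∈ℝ^X: letting ψ be the solution of the heat equation on [s,t] with ψ(s,·)=ψ̄ and χ the solution of the heat equation on [s,t] with χ(s,x)=ψ̄(x)² for all x, one has ∑_x χ(t,x)μ(x) - ∑_x ψ(t,x)²μ(x) ≥ 2(t-s)·Γ_t(μ,ψ(t,·)). -/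
open Filter Set MeasureTheory Topology
open scoped ENNReal NNReal

noncomputable section

variable {X : Type*}

/-- Discrete Laplacian. -/
def lapOp [Fintype X] (Q : X → X → ℝ) (f : X → ℝ) (x : X) : ℝ :=
  ∑ y, Q x y * (f y - f x)

/-- Adjoint discrete Laplacian. -/
def adjLapOp [Fintype X] (Q : X → X → ℝ) (f : X → ℝ) (x : X) : ℝ :=
  ∑ y, (Q y x * f y - Q x y * f x)

/-- Markov triple: nonneg off-diagonal rates, diagonal convention, irreducibility,
strictly positive reversible probability measure. -/
def IsMarkovTriple [Fintype X] [DecidableEq X] (Q : X → X → ℝ) (pm : X → ℝ) : Prop :=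
  (∀ x y : X, x ≠ y → 0 ≤ Q x y) ∧
  (∀ x : X, Q x x = -∑ y ∈ ({x} : Finset X)ᶜ, Q x y) ∧
  (∀ x y : X, Relation.ReflTransGen (fun a b => a ≠ b ∧ 0 < Q a b) x y) ∧
  (∀ x, 0 < pm x) ∧ (∑ x, pm x = 1) ∧
  (∀ x y, Q x y * pm x = Q y x * pm y)

/-- Locally Lipschitz on a set. -/
def LocLipschitzOn (f : ℝ → ℝ) (I : Set ℝ) : Prop :=
  ∀ t ∈ I, ∃ ε > 0, ∃ K : ℝ≥0, LipschitzOnWith K f (I ∩ Metric.ball t ε)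

/-- Regular time-dependent Markov triple on `I`. -/
def IsRegularTriple [Fintype X] [DecidableEq X] (I : Set ℝ)
    (Q : ℝ → X → X → ℝ) (pm : ℝ → X → ℝ) : Prop :=
  (∀ t ∈ I, IsMarkovTriple (Q t) (pm t)) ∧
  (∀ x y : X, x ≠ y → (∀ t ∈ I, Q t x y = 0) ∨
    ((∀ t ∈ I, 0 < Q t x y) ∧ LocLipschitzOn (fun t => Real.log (Q t x y)) I)) ∧
  (∀ x : X, LocLipschitzOn (fun t => pm t x) I)

/-- Solution of the heat equation on `[s,t]`. -/
def IsHeatSol [Fintype X] (Q : ℝ → X → X → ℝ) (s t : ℝ) (ψ : ℝ → X → ℝ) : Prop :=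
  (∀ x, ContinuousOn (fun r => ψ r x) (Icc s t)) ∧
  (∀ r ∈ Ioo s t, ∀ x, HasDerivAt (fun u => ψ u x) (lapOp (Q r) (ψ r) x) r)

/-- Solution of the adjoint heat equation on `[s,t]`. -/
def IsAdjHeatSol [Fintype X] (Q : ℝ → X → X → ℝ) (s t : ℝ) (σ : ℝ → X → ℝ) : Prop :=
  (∀ x, ContinuousOn (fun r => σ r x) (Icc s t)) ∧
  (∀ r ∈ Ioo s t, ∀ x, HasDerivAt (fun u => σ u x) (-adjLapOp (Q r) (σ r) x) r)

/-- Probability vector. -/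
def IsProb [Fintype X] (μ : X → ℝ) : Prop := (∀ x, 0 ≤ μ x) ∧ ∑ x, μ x = 1

/-- Strictly positive probability vector. -/
def IsProbPos [Fintype X] (μ : X → ℝ) : Prop := (∀ x, 0 < μ x) ∧ ∑ x, μ x = 1

/-- Logarithmic mean `Λ(a,b) = ∫_0^1 a^u b^(1-u) du`. -/
def logMean (a b : ℝ) : ℝ := ∫ u in (0:ℝ)..(1:ℝ), a ^ u * b ^ (1 - u)

/-- Partial derivative of the logarithmic mean in the first variable. -/
def logMeanD1 (a b : ℝ) : ℝ := deriv (fun u => logMean u b) a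

/-- Partial derivative of the logarithmic mean in the second variable. -/
def logMeanD2 (a b : ℝ) : ℝ := deriv (fun u => logMean a u) b

/-- Integrated carré du champ operator `Γ(μ,ψ)`. -/
def gammaOp [Fintype X] (Q : X → X → ℝ) (μ f : X → ℝ) : ℝ :=
  (1/2) * ∑ x, ∑ y, (f y - f x) ^ 2 * logMean (μ x * Q x y) (μ y * Q y x)


/-! ### Auxiliary lemmas -/

section Aux

lemma integral_affine' (a b : ℝ) : (∫ u in (0:ℝ)..(1:ℝ), (u * a + (1 - u) * b)) = (a + b) / 2 := by
  have h1 : (∫ u in (0:ℝ)..(1:ℝ), (u * a + (1 - u) * b))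
      = ∫ u in (0:ℝ)..(1:ℝ), (u * (a - b) + b) := by
    apply intervalIntegral.integral_congr
    intro u _; ring
  have h2 : IntervalIntegrable (fun u : ℝ => u * (a - b)) volume 0 1 :=
    (continuous_id.mul continuous_const).intervalIntegrable _ _
  have h3 : IntervalIntegrable (fun _ : ℝ => b) volume 0 1 :=
    intervalIntegrable_const
  rw [h1, intervalIntegral.integral_add h2 h3, intervalIntegral.integral_mul_const,
    integral_id, intervalIntegral.integral_const]
  simp; ring

lemma logMean_le_arith {a b : ℝ} (ha : 0 ≤ a) (hb : 0 ≤ b) : logMean a b ≤ (a + b) / 2 := by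
  rcases eq_or_lt_of_le ha with ha0 | ha
  · have hz : logMean a b = ∫ u in (0:ℝ)..(1:ℝ), (0:ℝ) := by
      apply intervalIntegral.integral_congr_ae
      apply Filter.Eventually.of_forall
      intro u hu
      rw [← ha0, Real.zero_rpow (Set.mem_Ioc.mp (by simpa using hu)).1.ne', zero_mul]
    rw [logMean] at hz
    rw [logMean, hz]
    simp
    positivity
  rcases eq_or_lt_of_le hb with hb0 | hb
  · have hae : ∀ᵐ u : ℝ, u ≠ 1 := by
      rw [MeasureTheory.ae_iff]
      simp only [not_not, Set.setOf_eq_eq_singleton]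
      exact measure_singleton (1:ℝ)
    have hz : logMean a b = ∫ u in (0:ℝ)..(1:ℝ), (0:ℝ) := by
      apply intervalIntegral.integral_congr_ae
      filter_upwards [hae] with u hu _
      have h1u : (1:ℝ) - u ≠ 0 := sub_ne_zero.mpr (Ne.symm hu)
      rw [← hb0, Real.zero_rpow h1u, mul_zero]
    rw [logMean] at hz
    rw [logMean, hz]
    simp
    positivity
  rw [← integral_affine' a b, logMean]
  apply intervalIntegral.integral_mono_on (by norm_num)
  · apply ContinuousOn.intervalIntegrable
    apply ContinuousOn.mul
    · exact fun u _ => (Real.continuousAt_const_rpow ha.ne').continuousWithinAt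
    · exact fun u _ => ((Real.continuousAt_const_rpow hb.ne').comp
        ((continuous_const.sub continuous_id).continuousAt)).continuousWithinAt
  · exact ((continuous_id.mul continuous_const).add
      ((continuous_const.sub continuous_id).mul continuous_const)).intervalIntegrable _ _
  · intro u hu
    rcases hu with ⟨hu0, hu1⟩
    exact Real.geom_mean_le_arith_mean2_weighted hu0 (by linarith) ha.le hb.le (by ring)

lemma sum_lap_mul [Fintype X] (Q : X → X → ℝ) (f g : X → ℝ) :
    ∑ x, lapOp Q f x * g x = ∑ x, f x * adjLapOp Q g x := by
  have h1 : ∑ x, lapOp Q f x * g x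
      = ∑ x, ∑ y, (Q x y * f y * g x - Q x y * f x * g x) := by
    apply Finset.sum_congr rfl; intro x _
    rw [lapOp, Finset.sum_mul]
    apply Finset.sum_congr rfl; intro y _; ring
  have h2 : ∑ x, f x * adjLapOp Q g x
      = ∑ x, ∑ y, (Q y x * f x * g y - Q x y * f x * g x) := by
    apply Finset.sum_congr rfl; intro x _
    rw [adjLapOp, Finset.mul_sum]
    apply Finset.sum_congr rfl; intro y _; ring
  rw [h1, h2]
  simp only [Finset.sum_sub_distrib]
  congr 1
  rw [Finset.sum_comm]

lemma lap_sq_sub [Fintype X] (Q : X → X → ℝ) (p : X → ℝ) (x : X) :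
    lapOp Q (fun z => p z ^ 2) x - 2 * p x * lapOp Q p x
      = ∑ y, Q x y * (p y - p x) ^ 2 := by
  rw [lapOp, lapOp, Finset.mul_sum, ← Finset.sum_sub_distrib]
  apply Finset.sum_congr rfl; intro y _; ring

lemma Fderiv_eq [Fintype X] (Q : X → X → ℝ) (c p g : X → ℝ) :
    ∑ x, ((lapOp Q c x - 2 * p x * lapOp Q p x) * g x + (c x - p x ^ 2) * (-adjLapOp Q g x))
      = ∑ x, ∑ y, Q x y * (p y - p x) ^ 2 * g x := by
  have expand : ∑ x, ((lapOp Q c x - 2 * p x * lapOp Q p x) * g x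
        + (c x - p x ^ 2) * (-adjLapOp Q g x))
      = (∑ x, lapOp Q c x * g x - ∑ x, c x * adjLapOp Q g x)
        + (∑ x, (fun z => p z ^ 2) x * adjLapOp Q g x - ∑ x, 2 * p x * lapOp Q p x * g x) := by
    rw [← Finset.sum_sub_distrib, ← Finset.sum_sub_distrib, ← Finset.sum_add_distrib]
    apply Finset.sum_congr rfl; intro x _; ring
  rw [expand, sum_lap_mul Q c g, sub_self, zero_add, ← sum_lap_mul Q (fun z => p z ^ 2) g,
    ← Finset.sum_sub_distrib]
  have : ∀ x, lapOp Q (fun z => p z ^ 2) x * g x - 2 * p x * lapOp Q p x * g x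
      = (∑ y, Q x y * (p y - p x) ^ 2) * g x := by
    intro x
    rw [← lap_sq_sub]; ring
  rw [Finset.sum_congr rfl (fun x _ => this x)]
  apply Finset.sum_congr rfl; intro x _
  rw [Finset.sum_mul]

lemma sym_sum [Fintype X] (Q : X → X → ℝ) (p g : X → ℝ) :
    ∑ x, ∑ y, Q x y * (p y - p x) ^ 2 * g x
      = (1/2) * ∑ x, ∑ y, (p y - p x) ^ 2 * (g x * Q x y + g y * Q y x) := by
  have h : ∑ x, ∑ y, Q x y * (p y - p x) ^ 2 * g x
      = ∑ x, ∑ y, (p y - p x) ^ 2 * (g y * Q y x) := by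
    rw [Finset.sum_comm]
    apply Finset.sum_congr rfl; intro x _
    apply Finset.sum_congr rfl; intro y _; ring
  have h2 : ∑ x, ∑ y, (p y - p x) ^ 2 * (g x * Q x y + g y * Q y x)
      = ∑ x, ∑ y, Q x y * (p y - p x) ^ 2 * g x + ∑ x, ∑ y, (p y - p x) ^ 2 * (g y * Q y x) := by
    rw [← Finset.sum_add_distrib]
    apply Finset.sum_congr rfl; intro x _
    rw [← Finset.sum_add_distrib]
    apply Finset.sum_congr rfl; intro y _; ring
  rw [h2, ← h]; ring

lemma LocLipschitzOn.continuousOn {f : ℝ → ℝ} {I : Set ℝ} (h : LocLipschitzOn f I) :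
    ContinuousOn f I := by
  intro t ht
  obtain ⟨ε, hε, K, hK⟩ := h t ht
  have h1 : ContinuousWithinAt f (I ∩ Metric.ball t ε) t :=
    hK.continuousOn t ⟨ht, Metric.mem_ball_self hε⟩
  exact h1.mono_of_mem_nhdsWithin (inter_mem_nhdsWithin I (Metric.ball_mem_nhds t hε))

lemma Q_continuousOn [Fintype X] [DecidableEq X] {I : Set ℝ} {Q : ℝ → X → X → ℝ}
    {pm : ℝ → X → ℝ} (hreg : IsRegularTriple I Q pm) (x y : X) :
    ContinuousOn (fun r => Q r x y) I := by
  rcases eq_or_ne x y with rfl | hxy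
  · have hdiag : ∀ r ∈ I, Q r x x = -∑ z ∈ ({x} : Finset X)ᶜ, Q r x z := fun r hr =>
      (hreg.1 r hr).2.1 x
    have hcont : ContinuousOn (fun r => -∑ z ∈ ({x} : Finset X)ᶜ, Q r x z) I := by
      apply ContinuousOn.neg
      apply continuousOn_finset_sum
      intro z hz
      have hzx : x ≠ z := by
        intro h; subst h; simp at hz
      rcases hreg.2.1 x z hzx with h0 | ⟨hpos, hlip⟩
      · exact continuousOn_const.congr (fun r hr => h0 r hr)
      · exact (Real.continuous_exp.comp_continuousOn hlip.continuousOn).congr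
          (fun r hr => (Real.exp_log (hpos r hr)).symm)
    exact hcont.congr hdiag
  · rcases hreg.2.1 x y hxy with h0 | ⟨hpos, hlip⟩
    · exact continuousOn_const.congr (fun r hr => h0 r hr)
    · exact (Real.continuous_exp.comp_continuousOn hlip.continuousOn).congr
        (fun r hr => (Real.exp_log (hpos r hr)).symm)

lemma Q_bound [Fintype X] [DecidableEq X] {I : Set ℝ} {Q : ℝ → X → X → ℝ}
    {pm : ℝ → X → ℝ} (hreg : IsRegularTriple I Q pm) {s t : ℝ}
    (hsub : Icc s t ⊆ I) :
    ∃ M : ℝ, 0 ≤ M ∧ ∀ r ∈ Icc s t, ∀ x y : X, |Q r x y| ≤ M := by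
  have hcont : ContinuousOn (fun r => ∑ x : X, ∑ y : X, |Q r x y|) (Icc s t) := by
    apply continuousOn_finset_sum; intro x _
    apply continuousOn_finset_sum; intro y _
    exact ((Q_continuousOn hreg x y).mono hsub).abs
  obtain ⟨C, hC⟩ := (isCompact_Icc).exists_bound_of_continuousOn hcont
  have key : ∀ r ∈ Icc s t, ∀ x y : X, |Q r x y| ≤ C := by
    intro r hr x y
    have h1 : |Q r x y| ≤ ∑ y' : X, |Q r x y'| :=
      Finset.single_le_sum (f := fun y' => |Q r x y'|) (fun z _ => abs_nonneg _)
        (Finset.mem_univ y)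
    have h2 : (∑ y' : X, |Q r x y'|) ≤ ∑ x' : X, ∑ y' : X, |Q r x' y'| :=
      Finset.single_le_sum (f := fun x' => ∑ y' : X, |Q r x' y'|)
        (fun z _ => Finset.sum_nonneg (fun _ _ => abs_nonneg _)) (Finset.mem_univ x)
    have h3 := hC r hr
    rw [Real.norm_eq_abs] at h3
    have h4 := le_abs_self (∑ x' : X, ∑ y' : X, |Q r x' y'|)
    linarith
  exact ⟨max C 0, le_max_right _ _, fun r hr x y => (key r hr x y).trans (le_max_left _ _)⟩

lemma hasDerivWithinAt_of_nmem_closure' {E : Type*} [NormedAddCommGroup E] [NormedSpace ℝ E]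
    {f : ℝ → E} {s : Set ℝ} {x : ℝ} {d : E} (h : x ∉ closure s) :
    HasDerivWithinAt f d s x := by
  rw [hasDerivWithinAt_iff_hasFDerivWithinAt]
  exact HasFDerivWithinAt.of_notMem_closure h

/-- Global existence (backwards from the right endpoint) for ODEs with a
uniform global Lipschitz bound and `v r 0 = 0`. -/
lemma ode_global_exists {E : Type*} [NormedAddCommGroup E] [NormedSpace ℝ E] [CompleteSpace E]
    (v : ℝ → E → E) (a b : ℝ) (hab : a ≤ b) (K : ℝ≥0)
    (hlip : ∀ r ∈ Icc a b, LipschitzWith K (v r))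
    (h0 : ∀ r ∈ Icc a b, v r 0 = 0)
    (hcont : ∀ x, ContinuousOn (fun r => v r x) (Icc a b)) (x₀ : E) :
    ∃ f : ℝ → E, f b = x₀ ∧ ∀ r ∈ Icc a b, HasDerivWithinAt f (v r (f r)) (Icc a b) r := by
  set δ : ℝ := 1 / (2 * (K : ℝ) + 1) with hδdef
  have hδpos : 0 < δ := by positivity
  have hvnorm : ∀ r ∈ Icc a b, ∀ x : E, ‖v r x‖ ≤ (K : ℝ) * ‖x‖ := by
    intro r hr x
    have := (hlip r hr).dist_le_mul x 0
    simpa [dist_eq_norm, h0 r hr] using this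
  have step : ∀ c c' : ℝ, a ≤ c → c ≤ c' → c' ≤ b → c' - c ≤ δ → ∀ z : E,
      ∃ h : ℝ → E, h c' = z ∧ ∀ r ∈ Icc c c', HasDerivWithinAt h (v r (h r)) (Icc c c') r := by
    intro c c' hac hcc' hc'b hstep z
    have hsub : Icc c c' ⊆ Icc a b := Icc_subset_Icc hac hc'b
    have hpl : IsPicardLindelof v (tmin := c) (tmax := c') ⟨c', hcc', le_rfl⟩ z (‖z‖₊ + 1) 0
        (K * (2 * ‖z‖₊ + 1)) K := by
      constructor
      · exact fun r hr => (hlip r (hsub hr)).lipschitzOnWith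
      · exact fun x _ => (hcont x).mono hsub
      · intro r hr x hx
        have hx' : dist x z ≤ ‖z‖ + 1 := by
          have := Metric.mem_closedBall.mp hx
          simpa using this
        have h1 : ‖x‖ ≤ ‖z‖ + (‖z‖ + 1) :=
          norm_le_norm_add_const_of_dist_le hx'
        simp only [NNReal.coe_mul, NNReal.coe_add, NNReal.coe_ofNat, NNReal.coe_one, coe_nnnorm]
        calc ‖v r x‖ ≤ (K : ℝ) * ‖x‖ := hvnorm r (hsub hr) x
          _ ≤ (K : ℝ) * (2 * ‖z‖ + 1) := by
              apply mul_le_mul_of_nonneg_left _ (NNReal.coe_nonneg K)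
              linarith
      · have hmax : max (c' - c') (c' - c) = c' - c := by
          rw [sub_self]
          exact max_eq_right (by linarith)
        show ((K * (2 * ‖z‖₊ + 1) : ℝ≥0) : ℝ) * max (c' - c') (c' - c)
          ≤ ((‖z‖₊ + 1 : ℝ≥0) : ℝ) - ((0 : ℝ≥0) : ℝ)
        simp only [NNReal.coe_mul, NNReal.coe_add, NNReal.coe_ofNat, NNReal.coe_one, coe_nnnorm,
          NNReal.coe_zero, sub_zero]
        rw [hmax]
        have hKnn := NNReal.coe_nonneg K
        have hznn := norm_nonneg z
        calc (K : ℝ) * (2 * ‖z‖ + 1) * (c' - c) ≤ (K : ℝ) * (2 * ‖z‖ + 2) * δ := by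
              apply mul_le_mul
              · nlinarith
              · exact hstep
              · linarith
              · positivity
          _ ≤ ‖z‖ + 1 := by
              rw [hδdef, mul_one_div, div_le_iff₀ (by positivity)]
              nlinarith
    obtain ⟨α, hα0, hα⟩ := hpl.exists_eq_forall_mem_Icc_hasDerivWithinAt₀
    exact ⟨α, hα0, hα⟩
  have main : ∀ n : ℕ, ∀ c ∈ Icc a b, b - c ≤ n * δ → ∀ y₀ : E,
      ∃ f : ℝ → E, f b = y₀ ∧ ∀ r ∈ Icc c b, HasDerivWithinAt f (v r (f r)) (Icc c b) r := by
    intro n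
    induction n with
    | zero =>
      intro c hc hcb y₀
      have hcb' : c = b := le_antisymm hc.2 (by simpa using hcb)
      subst hcb'
      exact step c c hc.1 le_rfl hc.2 (by linarith) y₀
    | succ n ih =>
      intro c hc hcb y₀
      by_cases hle : b - c ≤ n * δ
      · exact ih c hc hle y₀
      push_neg at hle
      set c' : ℝ := min (c + δ) b with hc'def
      have hcc' : c ≤ c' := le_min (by linarith) hc.2
      have hc'b : c' ≤ b := min_le_right _ _
      have hc'mem : c' ∈ Icc a b := ⟨hc.1.trans hcc', hc'b⟩
      have hbc' : b - c' ≤ n * δ := by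
        rcases le_total (c + δ) b with h | h
        · rw [hc'def, min_eq_left h]
          push_cast at hcb
          linarith
        · rw [hc'def, min_eq_right h]
          simp only [sub_self]
          positivity
      have hc'c : c' - c ≤ δ := by
        have : c' ≤ c + δ := min_le_left _ _
        linarith
      obtain ⟨g, hgb, hg⟩ := ih c' hc'mem hbc' y₀
      obtain ⟨h, hhc', hh⟩ := step c c' hc.1 hcc' hc'b hc'c (g c')
      set f : ℝ → E := fun r => if r < c' then h r else g r with hfdef
      have hfh : ∀ u ∈ Icc c c', f u = h u := by
        intro u hu
        by_cases hlt : u < c'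
        · simp only [hfdef, if_pos hlt]
        · have : u = c' := le_antisymm hu.2 (not_lt.mp hlt)
          rw [this]
          simp only [hfdef, if_neg (lt_irrefl c'), hhc']
      have hfg : ∀ u ∈ Icc c' b, f u = g u := by
        intro u hu
        simp only [hfdef, if_neg (not_lt.mpr hu.1)]
      have hD1 : ∀ r ∈ Icc c c', HasDerivWithinAt f (v r (f r)) (Icc c c') r := by
        intro r hr1
        rw [show f r = h r from hfh r hr1]
        exact (hh r hr1).congr hfh (hfh r hr1)
      have hD2 : ∀ r ∈ Icc c' b, HasDerivWithinAt f (v r (f r)) (Icc c' b) r := by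
        intro r hr2
        rw [show f r = g r from hfg r hr2]
        exact (hg r hr2).congr hfg (hfg r hr2)
      have hunion : Icc c b ⊆ Icc c c' ∪ Icc c' b := by
        intro u hu
        rcases le_total u c' with h1 | h1
        · exact Or.inl ⟨hu.1, h1⟩
        · exact Or.inr ⟨h1, hu.2⟩
      refine ⟨f, ?_, ?_⟩
      · rw [hfg b ⟨hc'b, le_rfl⟩, hgb]
      intro r hr
      have hsplit : HasDerivWithinAt f (v r (f r)) (Icc c c' ∪ Icc c' b) r := by
        rcases lt_trichotomy r c' with hlt | heq | hgt
        · refine (hD1 r ⟨hr.1, hlt.le⟩).union (hasDerivWithinAt_of_nmem_closure' ?_)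
          rw [closure_Icc]
          exact fun hmem => absurd hmem.1 (not_le.mpr hlt)
        · exact (hD1 r ⟨hr.1, heq.le⟩).union (hD2 r ⟨heq.ge, hr.2⟩)
        · refine (hasDerivWithinAt_of_nmem_closure' ?_).union (hD2 r ⟨hgt.le, hr.2⟩)
          rw [closure_Icc]
          exact fun hmem => absurd hmem.2 (not_le.mpr hgt)
      exact hsplit.mono hunion
  obtain ⟨n, hn⟩ := exists_nat_ge ((b - a) / δ)
  have hba : b - a ≤ n * δ := by
    rw [div_le_iff₀ hδpos] at hn
    linarith
  exact main n a ⟨le_rfl, hab⟩ hba x₀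

lemma adj_exists [Fintype X] [DecidableEq X]
    (Q : ℝ → X → X → ℝ) {s t : ℝ} (hst : s ≤ t) {M : ℝ} (hM0 : 0 ≤ M)
    (hQb : ∀ r ∈ Icc s t, ∀ x y : X, |Q r x y| ≤ M)
    (hQc : ∀ x y : X, ContinuousOn (fun r => Q r x y) (Icc s t)) (μ : X → ℝ) :
    ∃ σ : ℝ → X → ℝ, σ t = μ ∧
      (∀ x, ContinuousOn (fun r => σ r x) (Icc s t)) ∧
      (∀ r ∈ Ioo s t, ∀ x, HasDerivAt (fun u => σ u x) (-adjLapOp (Q r) (σ r) x) r) := by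
  classical
  set v : ℝ → (X → ℝ) → (X → ℝ) := fun r w x => -adjLapOp (Q r) w x with hv
  set n : ℕ := Fintype.card X with hn
  have hKnn : (0:ℝ) ≤ 2 * n * M := by positivity
  set K : ℝ≥0 := ⟨2 * n * M, hKnn⟩ with hK
  have hlip : ∀ r ∈ Icc s t, LipschitzWith K (v r) := by
    intro r hr
    apply LipschitzWith.of_dist_le_mul
    intro w w'
    have hKd : (K : ℝ) * dist w w' = 2 * n * M * dist w w' := rfl
    rw [hKd]
    apply dist_pi_le_iff (by positivity) |>.mpr
    intro x
    rw [Real.dist_eq]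
    have hdiff : v r w x - v r w' x
        = ∑ y, (Q r x y * (w x - w' x) - Q r y x * (w y - w' y)) := by
      simp only [hv, adjLapOp, neg_sub_neg]
      rw [← Finset.sum_sub_distrib]
      apply Finset.sum_congr rfl; intro y _; ring
    rw [hdiff]
    have hterm : ∀ y : X, |Q r x y * (w x - w' x) - Q r y x * (w y - w' y)|
        ≤ 2 * M * dist w w' := by
      intro y
      have h1 : |Q r x y * (w x - w' x)| ≤ M * dist w w' := by
        rw [abs_mul]
        apply mul_le_mul (hQb r hr x y) _ (abs_nonneg _) hM0
        rw [← Real.dist_eq]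
        exact dist_le_pi_dist w w' x
      have h2 : |Q r y x * (w y - w' y)| ≤ M * dist w w' := by
        rw [abs_mul]
        apply mul_le_mul (hQb r hr y x) _ (abs_nonneg _) hM0
        rw [← Real.dist_eq]
        exact dist_le_pi_dist w w' y
      calc |Q r x y * (w x - w' x) - Q r y x * (w y - w' y)|
          ≤ |Q r x y * (w x - w' x)| + |Q r y x * (w y - w' y)| := abs_sub _ _
        _ ≤ 2 * M * dist w w' := by linarith
    calc |∑ y, (Q r x y * (w x - w' x) - Q r y x * (w y - w' y))|
        ≤ ∑ y, |Q r x y * (w x - w' x) - Q r y x * (w y - w' y)| :=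
          Finset.abs_sum_le_sum_abs _ _
      _ ≤ ∑ _y : X, 2 * M * dist w w' := Finset.sum_le_sum (fun y _ => hterm y)
      _ = 2 * n * M * dist w w' := by
          rw [Finset.sum_const, Finset.card_univ]
          push_cast [hn]
          ring
  have h0 : ∀ r ∈ Icc s t, v r 0 = 0 := by
    intro r _
    funext x
    simp [hv, adjLapOp]
  have hcont : ∀ w : X → ℝ, ContinuousOn (fun r => v r w) (Icc s t) := by
    intro w
    apply continuousOn_pi.mpr
    intro x
    simp only [hv, adjLapOp]
    apply ContinuousOn.neg
    apply continuousOn_finset_sum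
    intro y _
    exact ((hQc y x).mul continuousOn_const).sub ((hQc x y).mul continuousOn_const)
  obtain ⟨f, hfb, hf⟩ := ode_global_exists v s t hst K hlip h0 hcont μ
  refine ⟨f, hfb, ?_, ?_⟩
  · intro x
    have hc : ContinuousOn f (Icc s t) := fun r hr => (hf r hr).continuousWithinAt
    exact (continuous_apply x).comp_continuousOn hc
  · intro r hr x
    have hD : HasDerivAt f (v r (f r)) r :=
      (hf r (Ioo_subset_Icc_self hr)).hasDerivAt (Icc_mem_nhds hr.1 hr.2)
    exact (ContinuousLinearMap.proj (R := ℝ) (φ := fun _ : X => ℝ) x).hasFDerivAt.comp_hasDerivAt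
      r hD

lemma adj_nonneg [Fintype X] [DecidableEq X]
    (Q : ℝ → X → X → ℝ) {s t : ℝ} (hst : s < t) {M : ℝ} (hM0 : 0 ≤ M)
    (hQb : ∀ r ∈ Icc s t, ∀ x y : X, |Q r x y| ≤ M)
    (hQnn : ∀ r ∈ Icc s t, ∀ x y : X, x ≠ y → 0 ≤ Q r x y)
    (σ : ℝ → X → ℝ)
    (hσc : ∀ x, ContinuousOn (fun r => σ r x) (Icc s t))
    (hσd : ∀ r ∈ Ioo s t, ∀ x, HasDerivAt (fun u => σ u x) (-adjLapOp (Q r) (σ r) x) r)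
    (hμ : ∀ x, 0 ≤ σ t x) :
    ∀ r ∈ Ioc s t, ∀ x, 0 ≤ σ r x := by
  classical
  set n : ℕ := Fintype.card X with hn
  set C : ℝ := n * M + 1 with hC
  have hCpos : 0 < C := by positivity
  have key : ∀ ε > 0, ∀ r ∈ Ioc s t, ∀ x, 0 < σ r x + ε * Real.exp (C * (t - r)) := by
    intro ε hε
    set h : X → ℝ → ℝ := fun x r => σ r x + ε * Real.exp (C * (t - r)) with hh
    have hhc : ∀ x, ContinuousOn (h x) (Icc s t) := by
      intro x
      apply (hσc x).add
      exact (continuous_const.mul (Real.continuous_exp.comp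
        (continuous_const.mul (continuous_const.sub continuous_id)))).continuousOn
    have hhd : ∀ x, ∀ r ∈ Ioo s t, HasDerivAt (h x)
        (-adjLapOp (Q r) (σ r) x + ε * (Real.exp (C * (t - r)) * (-C))) r := by
      intro x r hr
      apply HasDerivAt.add (hσd r hr x)
      have h1 : HasDerivAt (fun u : ℝ => C * (t - u)) (-C) r := by
        simpa using (HasDerivAt.const_mul C ((hasDerivAt_id r).const_sub t))
      have h2 := h1.exp
      have h3 := h2.const_mul ε
      exact h3
    set S : Set ℝ := {r ∈ Icc s t | ∃ x, h x r ≤ 0} with hS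
    have hSclosed : IsClosed S := by
      have : S = ⋃ x : X, (Icc s t ∩ (h x) ⁻¹' (Iic 0)) := by
        ext r
        simp only [hS, mem_setOf_eq, mem_iUnion, mem_inter_iff, mem_preimage, mem_Iic]
        constructor
        · rintro ⟨hr, x, hx⟩; exact ⟨x, hr, hx⟩
        · rintro ⟨x, hr, hx⟩; exact ⟨hr, x, hx⟩
      rw [this]
      apply isClosed_iUnion_of_finite
      intro x
      exact (hhc x).preimage_isClosed_of_isClosed isClosed_Icc isClosed_Iic
    intro r hr x
    by_contra hcon
    push_neg at hcon
    have hrS : r ∈ S := ⟨⟨hr.1.le, hr.2⟩, x, hcon⟩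
    have hSne : S.Nonempty := ⟨r, hrS⟩
    have hScomp : IsCompact S := isCompact_Icc.of_isClosed_subset hSclosed (sep_subset _ _)
    set r₀ : ℝ := sSup S with hr₀
    have hr₀S : r₀ ∈ S := hScomp.sSup_mem hSne
    have hSbdd : BddAbove S := hScomp.bddAbove
    have ht_not : t ∉ S := by
      rintro ⟨-, x', hx'⟩
      have : h x' t = σ t x' + ε := by
        simp [hh]
      rw [this] at hx'
      have := hμ x'
      linarith
    have hr₀t : r₀ < t := lt_of_le_of_ne hr₀S.1.2 (fun hEq => ht_not (hEq ▸ hr₀S))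
    have hnotS : ∀ u ∈ Ioc r₀ t, ∀ y, 0 < h y u := by
      intro u hu y
      by_contra hy
      push_neg at hy
      have huS : u ∈ S := ⟨⟨hr₀S.1.1.trans hu.1.le, hu.2⟩, y, hy⟩
      exact absurd (le_csSup hSbdd huS) (not_le.mpr hu.1)
    have hbd : ∀ y, 0 ≤ h y r₀ := by
      intro y
      have hcw : ContinuousWithinAt (h y) (Icc s t) r₀ := (hhc y) r₀ hr₀S.1
      have hTend : Tendsto (h y) (𝓝[>] r₀) (𝓝 (h y r₀)) := by
        apply hcw.tendsto.mono_left
        apply nhdsWithin_le_of_mem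
        have hIoc : Ioc r₀ t ∈ 𝓝[>] r₀ := Ioc_mem_nhdsGT_of_mem ⟨le_rfl, hr₀t⟩
        apply mem_of_superset hIoc
        exact fun u hu => ⟨hr₀S.1.1.trans hu.1.le, hu.2⟩
      apply ge_of_tendsto hTend
      filter_upwards [Ioc_mem_nhdsGT_of_mem (⟨le_rfl, hr₀t⟩ : r₀ ∈ Ico r₀ t)] with u hu
      exact (hnotS u hu y).le
    obtain ⟨x₀, hx₀⟩ := hr₀S.2
    have hx₀0 : h x₀ r₀ = 0 := le_antisymm hx₀ (hbd x₀)
    have hr₀s : r₀ = s := by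
      by_contra hne
      have hr₀in : r₀ ∈ Ioo s t := ⟨lt_of_le_of_ne hr₀S.1.1 (Ne.symm hne), hr₀t⟩
      set β : ℝ := ε * Real.exp (C * (t - r₀)) with hβ
      have hβpos : 0 < β := by positivity
      have hσx₀ : σ r₀ x₀ = -β := by
        have : h x₀ r₀ = σ r₀ x₀ + β := rfl
        rw [this] at hx₀0
        linarith
      have hσy : ∀ y, -β ≤ σ r₀ y := by
        intro y
        have := hbd y
        rw [show h y r₀ = σ r₀ y + β from rfl] at this
        linarith
      have hder := hhd x₀ r₀ hr₀in
      set d : ℝ := -adjLapOp (Q r₀) (σ r₀) x₀ + ε * (Real.exp (C * (t - r₀)) * (-C)) with hd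
      have hdneg : d < 0 := by
        have hsum : -adjLapOp (Q r₀) (σ r₀) x₀
            = ∑ y, (Q r₀ x₀ y * σ r₀ x₀ - Q r₀ y x₀ * σ r₀ y) := by
          rw [adjLapOp, ← Finset.sum_neg_distrib]
          apply Finset.sum_congr rfl; intro y _; ring
        have hub : ∀ y : X, Q r₀ x₀ y * σ r₀ x₀ - Q r₀ y x₀ * σ r₀ y ≤ M * β := by
          intro y
          rcases eq_or_ne y x₀ with rfl | hyx
          · simp only [sub_self]
            positivity
          · have h1 : 0 ≤ Q r₀ x₀ y := hQnn r₀ (Ioo_subset_Icc_self hr₀in) x₀ y (Ne.symm hyx)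
            have h2 : 0 ≤ Q r₀ y x₀ := hQnn r₀ (Ioo_subset_Icc_self hr₀in) y x₀ hyx
            have h3 : Q r₀ y x₀ ≤ M := (abs_le.mp (hQb r₀ (Ioo_subset_Icc_self hr₀in) y x₀)).2
            have h4 : Q r₀ x₀ y * σ r₀ x₀ ≤ 0 := by
              rw [hσx₀]
              exact mul_nonpos_of_nonneg_of_nonpos h1 (by linarith)
            have h5 : -(Q r₀ y x₀ * σ r₀ y) ≤ Q r₀ y x₀ * β := by
              have := mul_le_mul_of_nonneg_left (hσy y) h2
              linarith [this]
            have h6 : Q r₀ y x₀ * β ≤ M * β := mul_le_mul_of_nonneg_right h3 hβpos.le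
            linarith
        have hsum_le : -adjLapOp (Q r₀) (σ r₀) x₀ ≤ n * (M * β) := by
          rw [hsum]
          calc ∑ y, (Q r₀ x₀ y * σ r₀ x₀ - Q r₀ y x₀ * σ r₀ y)
              ≤ ∑ _y : X, M * β := Finset.sum_le_sum (fun y _ => hub y)
            _ = n * (M * β) := by
                rw [Finset.sum_const, Finset.card_univ, nsmul_eq_mul, hn]
        have hexp : ε * (Real.exp (C * (t - r₀)) * (-C)) = -(C * β) := by
          rw [hβ]; ring
        rw [hd, hexp]
        have : (n : ℝ) * (M * β) - C * β = -β := by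
          rw [hC]; ring
        linarith
      have hT : Tendsto (slope (h x₀) r₀) (𝓝[≠] r₀) (𝓝 d) :=
        hasDerivAt_iff_tendsto_slope.mp hder
      have hev1 : ∀ᶠ u in 𝓝[>] r₀, slope (h x₀) r₀ u < 0 := by
        have := hT.eventually (eventually_lt_nhds hdneg)
        exact this.filter_mono (nhdsWithin_mono r₀ (fun u hu => ne_of_gt hu))
      have hev2 : ∀ᶠ u in 𝓝[>] r₀, u ∈ Ioc r₀ t :=
        Ioc_mem_nhdsGT_of_mem ⟨le_rfl, hr₀t⟩
      obtain ⟨u, hu1, hu2⟩ := (hev1.and hev2).exists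
      have hpos : 0 < slope (h x₀) r₀ u := by
        rw [slope_def_field]
        rw [div_pos_iff]
        left
        constructor
        · rw [hx₀0, sub_zero]
          exact hnotS u hu2 x₀
        · linarith [hu2.1]
      linarith
    have : r ≤ r₀ := le_csSup hSbdd hrS
    rw [hr₀s] at this
    exact absurd hr.1 (not_lt.mpr this)
  intro r hr x
  by_contra hneg
  push_neg at hneg
  set e : ℝ := Real.exp (C * (t - r)) with he
  have hepos : 0 < e := Real.exp_pos _
  have hε : 0 < -σ r x / (2 * e) := by
    apply div_pos (by linarith) (by linarith)
  have := key (-σ r x / (2 * e)) hε r hr x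
  rw [← he] at this
  have hcalc : σ r x + -σ r x / (2 * e) * e = σ r x / 2 := by
    field_simp
    ring
  rw [hcalc] at this
  linarith

end Aux

/-- Reverse Poincaré inequality for discrete super Ricci flows. -/
theorem reverse_poincare_super_ricci_flow
    {X : Type*} [Fintype X] [DecidableEq X]
    (I : Set ℝ) (hIo : IsOpen I) (hIc : Set.OrdConnected I)
    (Q : ℝ → X → X → ℝ) (pm : ℝ → X → ℝ)
    (hreg : IsRegularTriple I Q pm)
    (hGE : ∀ r1 ∈ I, ∀ r2 ∈ I, r1 ≤ r2 → ∀ χ σ : ℝ → X → ℝ,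
      IsHeatSol Q r1 r2 χ → IsAdjHeatSol Q r1 r2 σ → IsProb (σ r2) →
        gammaOp (Q r2) (σ r2) (χ r2) ≤ gammaOp (Q r1) (σ r1) (χ r1)) :
    ∀ s ∈ I, ∀ t ∈ I, s ≤ t → ∀ μ : X → ℝ, IsProb μ → ∀ ψbar : X → ℝ,
      ∀ ψ χ : ℝ → X → ℝ,
        IsHeatSol Q s t ψ → ψ s = ψbar →
        IsHeatSol Q s t χ → (∀ x, χ s x = (ψbar x) ^ 2) →
        (∑ x, χ t x * μ x) - ∑ x, (ψ t x) ^ 2 * μ x ≥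
          2 * (t - s) * gammaOp (Q t) μ (ψ t) := by
  intro s hs t ht hst μ hμ ψbar ψ χ hψ hψs hχ hχs
  have hsub : Icc s t ⊆ I := hIc.out hs ht
  set γ : ℝ := gammaOp (Q t) μ (ψ t) with hγ
  rcases eq_or_lt_of_le hst with rfl | hlt
  · -- degenerate case s = t
    have h1 : ∀ x, χ s x = (ψ s x) ^ 2 := by
      intro x
      rw [hχs x, hψs]
    have : (∑ x, χ s x * μ x) = ∑ x, (ψ s x) ^ 2 * μ x := by
      apply Finset.sum_congr rfl
      intro x _
      rw [h1 x]
    rw [this]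
    simp
  -- nondegenerate case
  obtain ⟨M, hM0, hQb⟩ := Q_bound hreg hsub
  have hQc : ∀ x y : X, ContinuousOn (fun r => Q r x y) (Icc s t) :=
    fun x y => (Q_continuousOn hreg x y).mono hsub
  have hQnn : ∀ r ∈ Icc s t, ∀ x y : X, x ≠ y → 0 ≤ Q r x y :=
    fun r hr x y hxy => (hreg.1 r (hsub hr)).1 x y hxy
  obtain ⟨σ, hσt, hσc, hσd⟩ := adj_exists Q hst hM0 hQb hQc μ
  have hσnn : ∀ r ∈ Ioc s t, ∀ x, 0 ≤ σ r x := by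
    apply adj_nonneg Q hlt hM0 hQb hQnn σ hσc hσd
    intro x
    rw [hσt]
    exact hμ.1 x
  -- the interpolation functional
  set F : ℝ → ℝ := fun r => ∑ x, (χ r x - (ψ r x) ^ 2) * σ r x with hF
  have hFc : ContinuousOn F (Icc s t) := by
    apply continuousOn_finset_sum
    intro x _
    exact (((hχ.1 x).sub ((hψ.1 x).pow 2)).mul (hσc x))
  -- derivative of F
  set D : ℝ → ℝ := fun r => ∑ x, ((lapOp (Q r) (χ r) x - 2 * ψ r x * lapOp (Q r) (ψ r) x)
      * σ r x + (χ r x - ψ r x ^ 2) * (-adjLapOp (Q r) (σ r) x)) with hD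
  have hFd : ∀ r ∈ Ioo s t, HasDerivAt F (D r) r := by
    intro r hr
    apply HasDerivAt.fun_sum
    intro x _
    have h1 := hχ.2 r hr x
    have h2 := hψ.2 r hr x
    have h3 := hσd r hr x
    have h4 : HasDerivAt (fun u => ψ u x ^ 2) (2 * ψ r x * lapOp (Q r) (ψ r) x) r := by
      have h5 : HasDerivAt (fun u => ψ u x ^ 2)
          ((2:ℕ) * ψ r x ^ (2 - 1) * lapOp (Q r) (ψ r) x) r := h2.fun_pow 2
      convert h5 using 1
      push_cast
      ring
    exact (h1.sub h4).mul h3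
  -- lower bound on the derivative
  have hDge : ∀ r ∈ Ioo s t, 2 * γ ≤ D r := by
    intro r hr
    have hrI : r ∈ I := hsub ⟨hr.1.le, hr.2.le⟩
    -- gradient estimate
    have hψr : IsHeatSol Q r t ψ :=
      ⟨fun x => (hψ.1 x).mono (Icc_subset_Icc hr.1.le le_rfl),
       fun u hu x => hψ.2 u ⟨hr.1.trans hu.1, hu.2⟩ x⟩
    have hσr : IsAdjHeatSol Q r t σ :=
      ⟨fun x => (hσc x).mono (Icc_subset_Icc hr.1.le le_rfl),
       fun u hu x => hσd u ⟨hr.1.trans hu.1, hu.2⟩ x⟩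
    have hprob : IsProb (σ t) := by
      rw [hσt]; exact hμ
    have hGE' : gammaOp (Q t) (σ t) (ψ t) ≤ gammaOp (Q r) (σ r) (ψ r) :=
      hGE r hrI t ht hr.2.le ψ σ hψr hσr hprob
    rw [hσt] at hGE'
    -- compare gammaOp with D r
    have hDval : D r = ∑ x, ∑ y, Q r x y * (ψ r y - ψ r x) ^ 2 * σ r x :=
      Fderiv_eq (Q r) (χ r) (ψ r) (σ r)
    have hcomp : 2 * gammaOp (Q r) (σ r) (ψ r) ≤ D r := by
      rw [hDval, sym_sum (Q r) (ψ r) (σ r), gammaOp]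
      rw [show (2:ℝ) * ((1/2) * ∑ x, ∑ y, (ψ r y - ψ r x) ^ 2
          * logMean (σ r x * Q r x y) (σ r y * Q r y x))
        = ∑ x, ∑ y, (ψ r y - ψ r x) ^ 2
          * logMean (σ r x * Q r x y) (σ r y * Q r y x) from by ring]
      have hhalf : ∀ x y : X,
          (ψ r y - ψ r x) ^ 2 * logMean (σ r x * Q r x y) (σ r y * Q r y x)
            ≤ (1/2) * ((ψ r y - ψ r x) ^ 2 * (σ r x * Q r x y + σ r y * Q r y x)) := by
        intro x y
        rcases eq_or_ne x y with rfl | hxy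
        · simp
        · have ha : 0 ≤ σ r x * Q r x y :=
            mul_nonneg (hσnn r ⟨hr.1, hr.2.le⟩ x)
              (hQnn r ⟨hr.1.le, hr.2.le⟩ x y hxy)
          have hb : 0 ≤ σ r y * Q r y x :=
            mul_nonneg (hσnn r ⟨hr.1, hr.2.le⟩ y)
              (hQnn r ⟨hr.1.le, hr.2.le⟩ y x (Ne.symm hxy))
          have := logMean_le_arith ha hb
          calc (ψ r y - ψ r x) ^ 2 * logMean (σ r x * Q r x y) (σ r y * Q r y x)
              ≤ (ψ r y - ψ r x) ^ 2 * ((σ r x * Q r x y + σ r y * Q r y x) / 2) :=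
                mul_le_mul_of_nonneg_left this (sq_nonneg _)
            _ = (1/2) * ((ψ r y - ψ r x) ^ 2 * (σ r x * Q r x y + σ r y * Q r y x)) := by
                ring
      calc (∑ x, ∑ y, (ψ r y - ψ r x) ^ 2 * logMean (σ r x * Q r x y) (σ r y * Q r y x))
          ≤ ∑ x, ∑ y, (1/2) * ((ψ r y - ψ r x) ^ 2 * (σ r x * Q r x y + σ r y * Q r y x)) :=
            Finset.sum_le_sum (fun x _ => Finset.sum_le_sum (fun y _ => hhalf x y))
        _ = (1/2) * ∑ x, ∑ y, (ψ r y - ψ r x) ^ 2 * (σ r x * Q r x y + σ r y * Q r y x) := by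
            rw [Finset.mul_sum]
            apply Finset.sum_congr rfl
            intro x _
            rw [Finset.mul_sum]
    linarith
  -- monotonicity of G
  set G : ℝ → ℝ := fun u => F u - 2 * γ * u with hG
  have hGmono : MonotoneOn G (Icc s t) := by
    apply monotoneOn_of_deriv_nonneg (convex_Icc s t)
    · exact hFc.sub ((continuous_const.mul continuous_id).continuousOn)
    · intro u hu
      rw [interior_Icc] at hu
      exact ((hFd u hu).sub ((hasDerivAt_id u).const_mul (2*γ))).differentiableAt.differentiableWithinAt
    · intro u hu
      rw [interior_Icc] at hu
      have hd : HasDerivAt G (D u - 2 * γ * 1) u :=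
        (hFd u hu).sub ((hasDerivAt_id u).const_mul (2*γ))
      rw [hd.deriv]
      have := hDge u hu
      linarith
  have hGle : G s ≤ G t := hGmono ⟨le_rfl, hst⟩ ⟨hst, le_rfl⟩ hst
  have hFs : F s = 0 := by
    rw [hF]
    apply Finset.sum_eq_zero
    intro x _
    rw [hχs x, hψs]
    ring
  have hFt : F t = (∑ x, χ t x * μ x) - ∑ x, (ψ t x) ^ 2 * μ x := by
    rw [hF, ← Finset.sum_sub_distrib]
    apply Finset.sum_congr rfl
    intro x _
    rw [hσt]
    ring
  rw [hG] at hGle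
  simp only at hGle
  rw [hFs, hFt] at hGle
  rw [ge_iff_le, hγ]
  nlinarith [hGle]
end
end

section
/- Soliton-type super Ricci flows from entropic curvature bounds: Let (X,Q,π) be a Markov triple and κ∈ℝ, and suppose that Γ₂(μ,ψ) ≥ κ·Γ(μ,ψ) for all strictly positive μ∈P_*(X) and all ψ∈ℝ^X, where Γ and Γ₂ are the integrated carré du champ operators of (X,Q,π). Define L_t := 1/(1-2κt) for t∈I, where I=[0,1/(2κ)) if κ>0 and I=[0,∞) if κ≤0, and set Q_t := L_t·Q and π_t := π. Then the family (X,Q_t,π_t)_{t∈I} satisfies the dynamic Bochner inequality: for every t∈I, every strictly positive μ∈P_*(X) and every ψ∈ℝ^X, Γ_{2,t}(μ,ψ) ≥ (1/2)∂_tΓ_t(μ,ψ), where Γ_{2,t}, Γ_t, ∂_tΓ_t are the operators associated with the rates Q_t. -/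
open Filter Set MeasureTheory Topology
open scoped ENNReal NNReal

noncomputable section

variable {X : Type*}

/-- Integrated iterated carré du champ operator `Γ₂(μ,ψ)`. -/
def gamma2Op [Fintype X] (Q : X → X → ℝ) (pm μ f : X → ℝ) : ℝ :=
  (1/4) * ∑ x, ∑ y, (f y - f x) ^ 2 *
      (logMeanD1 (μ x / pm x) (μ y / pm y) * lapOp Q (fun z => μ z / pm z) x +
        logMeanD2 (μ x / pm x) (μ y / pm y) * lapOp Q (fun z => μ z / pm z) y) *
      Q x y * pm x
    - (1/2) * ∑ x, ∑ y, (f y - f x) * (lapOp Q f y - lapOp Q f x) *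
        logMean (μ x * Q x y) (μ y * Q y x)

/-- Time derivative `∂ₜΓₜ(μ,ψ)` of the carré du champ operator. -/
def gammaDtOp [Fintype X] (Q : ℝ → X → X → ℝ) (t : ℝ) (μ f : X → ℝ) : ℝ :=
  (1/2) * ∑ x, ∑ y, (f y - f x) ^ 2 *
    (logMeanD1 (μ x * Q t x y) (μ y * Q t y x) * (μ x * deriv (fun r => Q r x y) t) +
      logMeanD2 (μ x * Q t x y) (μ y * Q t y x) * (μ y * deriv (fun r => Q r y x) t))

lemma cont_rpow_exp {a : ℝ} (ha : 0 < a) : Continuous fun x : ℝ => a ^ x := by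
  have h : (fun x : ℝ => a ^ x) = fun x => Real.exp (Real.log a * x) := by
    funext x; rw [Real.rpow_def_of_pos ha]
  rw [h]
  exact Real.continuous_exp.comp (continuous_const.mul continuous_id)

lemma logMean_zero_left (b : ℝ) : logMean 0 b = 0 := by
  unfold logMean
  rw [intervalIntegral.integral_of_le zero_le_one]
  rw [MeasureTheory.setIntegral_congr_fun measurableSet_Ioc
    (g := fun _ => (0:ℝ)) (fun x hx => by
      rw [Real.zero_rpow (ne_of_gt hx.1), zero_mul])]
  simp

lemma logMean_symm (a b : ℝ) : logMean a b = logMean b a := by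
  unfold logMean
  have h := intervalIntegral.integral_comp_sub_left (a := 0) (b := 1)
    (fun x => a ^ x * b ^ (1 - x)) 1
  simp only [sub_zero, sub_self] at h
  rw [← h]
  apply intervalIntegral.integral_congr
  intro u _
  simp only
  rw [sub_sub_cancel, mul_comm]

lemma logMean_zero_right (a : ℝ) : logMean a 0 = 0 := by
  rw [logMean_symm, logMean_zero_left]

lemma logMean_smul {c a b : ℝ} (hc : 0 < c) (ha : 0 < a) (hb : 0 < b) :
    logMean (c * a) (c * b) = c * logMean a b := by
  unfold logMean
  rw [← intervalIntegral.integral_const_mul]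
  apply intervalIntegral.integral_congr
  intro u _
  simp only
  rw [Real.mul_rpow hc.le ha.le, Real.mul_rpow hc.le hb.le,
    show c ^ u * a ^ u * (c ^ (1-u) * b ^ (1-u)) = (c ^ u * c ^ (1-u)) * (a ^ u * b ^ (1-u)) by
      ring,
    ← Real.rpow_add hc, show u + (1 - u) = (1:ℝ) by ring, Real.rpow_one]

lemma cont_aux {a b : ℝ} (ha : 0 < a) (hb : 0 < b) :
    Continuous fun α : ℝ => α * a ^ (α - 1) * b ^ (1 - α) :=
  ((continuous_id.mul ((cont_rpow_exp ha).comp (continuous_id.sub continuous_const)))).mul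
    ((cont_rpow_exp hb).comp (continuous_const.sub continuous_id))

lemma cont_aux2 {a b : ℝ} (ha : 0 < a) (hb : 0 < b) :
    Continuous fun α : ℝ => a ^ α * b ^ (1 - α) :=
  (cont_rpow_exp ha).mul ((cont_rpow_exp hb).comp (continuous_const.sub continuous_id))

lemma hasDerivAt_logMean_fst {a b : ℝ} (ha : 0 < a) (hb : 0 < b) :
    HasDerivAt (fun u => logMean u b) (∫ α in (0:ℝ)..1, α * a ^ (α - 1) * b ^ (1 - α)) a := by
  have key := intervalIntegral.hasDerivAt_integral_of_dominated_loc_of_deriv_le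
    (𝕜 := ℝ)
    (F := fun u α => u ^ α * b ^ (1 - α)) (F' := fun u α => α * u ^ (α - 1) * b ^ (1 - α))
    (x₀ := a) (s := Metric.ball a (a / 2)) (a := 0) (b := 1) (μ := MeasureTheory.volume)
    (bound := fun _ => (max (2 / a) 1) * (max b 1)) (Metric.ball_mem_nhds a (half_pos ha)) ?_ ?_ ?_ ?_ ?_ ?_
  · exact key.2
  · filter_upwards [eventually_gt_nhds (half_lt_self ha)] with u hu
    exact ((cont_aux2 ((half_pos ha).trans hu) hb)).aestronglyMeasurable.restrict
  · exact (cont_aux2 ha hb).intervalIntegrable 0 1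
  · exact (cont_aux ha hb).aestronglyMeasurable.restrict
  · apply MeasureTheory.ae_of_all
    intro α hα u hu
    rw [Set.uIoc_of_le zero_le_one] at hα
    obtain ⟨hα0, hα1⟩ := hα
    rw [Metric.mem_ball, Real.dist_eq, abs_sub_lt_iff] at hu
    have hu0 : 0 < u := by linarith
    show ‖α * u ^ (α - 1) * b ^ (1 - α)‖ ≤ max (2 / a) 1 * max b 1
    have h1 : u ^ (α - 1) ≤ max (2 / a) 1 := by
      rcases le_or_gt 1 u with h | h
      · exact le_trans (Real.rpow_le_one_of_one_le_of_nonpos h (by linarith)) (le_max_right _ _)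
      · refine le_trans ?_ (le_max_left _ _)
        have h2 : u ^ (α - 1) ≤ u ^ (-1 : ℝ) :=
          Real.rpow_le_rpow_of_exponent_ge hu0 h.le (by linarith)
        rw [Real.rpow_neg_one] at h2
        refine le_trans h2 ?_
        rw [inv_eq_one_div, div_le_div_iff₀ hu0 ha]
        nlinarith
    have h2 : b ^ (1 - α) ≤ max b 1 := by
      rcases le_or_gt 1 b with h | h
      · refine le_trans ?_ (le_max_left _ _)
        calc b ^ (1 - α) ≤ b ^ (1 : ℝ) :=
              Real.rpow_le_rpow_of_exponent_le h (by linarith)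
          _ = b := Real.rpow_one b
      · exact le_trans (Real.rpow_le_one hb.le h.le (by linarith)) (le_max_right _ _)
    have hup : (0:ℝ) < u ^ (α - 1) := Real.rpow_pos_of_pos hu0 _
    have hbp : (0:ℝ) < b ^ (1 - α) := Real.rpow_pos_of_pos hb _
    rw [Real.norm_eq_abs, abs_of_nonneg (by positivity)]
    have hmax1 : (0:ℝ) ≤ max (2 / a) 1 := le_trans zero_le_one (le_max_right _ _)
    calc α * u ^ (α - 1) * b ^ (1 - α) ≤ 1 * max (2 / a) 1 * max b 1 := by
          apply mul_le_mul _ h2 hbp.le (by positivity)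
          exact mul_le_mul hα1 h1 hup.le zero_le_one
      _ = max (2 / a) 1 * max b 1 := by ring
  · exact intervalIntegrable_const
  · apply MeasureTheory.ae_of_all
    intro α _ u hu
    rw [Metric.mem_ball, Real.dist_eq, abs_sub_lt_iff] at hu
    have hu0 : 0 < u := by linarith
    exact (Real.hasDerivAt_rpow_const (Or.inl hu0.ne')).mul_const _

lemma logMeanD1_eq {a b : ℝ} (ha : 0 < a) (hb : 0 < b) :
    logMeanD1 a b = ∫ α in (0:ℝ)..1, α * a ^ (α - 1) * b ^ (1 - α) :=
  (hasDerivAt_logMean_fst ha hb).deriv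

lemma logMeanD2_eq_D1 (a b : ℝ) : logMeanD2 a b = logMeanD1 b a := by
  unfold logMeanD2 logMeanD1
  congr 1
  funext u
  exact logMean_symm a u

lemma logMeanD1_zero_right (a : ℝ) : logMeanD1 a 0 = 0 := by
  unfold logMeanD1
  rw [show (fun u : ℝ => logMean u 0) = fun _ => (0:ℝ) from funext logMean_zero_right]
  simp

lemma logMeanD2_zero_left (b : ℝ) : logMeanD2 0 b = 0 := by
  rw [logMeanD2_eq_D1]
  unfold logMeanD1
  rw [show (fun u : ℝ => logMean u 0) = fun _ => (0:ℝ) from funext logMean_zero_right]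
  simp

lemma euler_logMean {a b : ℝ} (ha : 0 < a) (hb : 0 < b) :
    a * logMeanD1 a b + b * logMeanD2 a b = logMean a b := by
  rw [logMeanD2_eq_D1, logMeanD1_eq ha hb, logMeanD1_eq hb ha,
    ← intervalIntegral.integral_const_mul, ← intervalIntegral.integral_const_mul]
  have e1 : (∫ α in (0:ℝ)..1, a * (α * a ^ (α - 1) * b ^ (1 - α)))
      = ∫ α in (0:ℝ)..1, α * (a ^ α * b ^ (1 - α)) := by
    apply intervalIntegral.integral_congr
    intro u _
    simp only
    rw [show a * (u * a ^ (u - 1) * b ^ (1 - u)) = u * ((a * a ^ (u-1)) * b ^ (1-u)) by ring,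
      show a * a ^ (u - 1) = a ^ (1:ℝ) * a ^ (u-1) by rw [Real.rpow_one],
      ← Real.rpow_add ha, show (1:ℝ) + (u - 1) = u by ring]
  have e2 : (∫ α in (0:ℝ)..1, b * (α * b ^ (α - 1) * a ^ (1 - α)))
      = ∫ α in (0:ℝ)..1, (1 - α) * (a ^ α * b ^ (1 - α)) := by
    have h := intervalIntegral.integral_comp_sub_left (a := 0) (b := 1)
      (fun α => b * (α * b ^ (α - 1) * a ^ (1 - α))) 1
    simp only [sub_zero, sub_self] at h
    rw [← h]
    apply intervalIntegral.integral_congr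
    intro u _
    simp only
    rw [show (1:ℝ) - u - 1 = -u by ring, sub_sub_cancel,
      show b * ((1 - u) * b ^ (-u) * a ^ u) = (1 - u) * (a ^ u * (b ^ (1:ℝ) * b ^ (-u))) by
        rw [Real.rpow_one]; ring,
      ← Real.rpow_add hb, show (1:ℝ) + -u = 1 - u by ring]
  rw [e1, e2, ← intervalIntegral.integral_add]
  · unfold logMean
    apply intervalIntegral.integral_congr
    intro u _
    ring
  · exact (continuous_id.mul (cont_aux2 ha hb)).intervalIntegrable 0 1
  · exact ((continuous_const.sub continuous_id).mul (cont_aux2 ha hb)).intervalIntegrable 0 1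

lemma logMean_mul_scale {L m n q r : ℝ} (hL : 0 < L) (hm : 0 < m) (hn : 0 < n)
    (hq : 0 ≤ q) (hr : 0 ≤ r) :
    logMean (m * (L * q)) (n * (L * r)) = L * logMean (m * q) (n * r) := by
  rcases hq.eq_or_lt with h | h
  · rw [← h]; simp [logMean_zero_left]
  rcases hr.eq_or_lt with h' | h'
  · rw [← h']; simp [logMean_zero_right]
  · rw [show m * (L * q) = L * (m * q) by ring, show n * (L * r) = L * (n * r) by ring,
      logMean_smul hL (by positivity) (by positivity)]

lemma lapOp_smul {X : Type*} [Fintype X] (L : ℝ) (Q : X → X → ℝ) (g : X → ℝ) (x : X) :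
    lapOp (fun x y => L * Q x y) g x = L * lapOp Q g x := by
  unfold lapOp
  rw [Finset.mul_sum]
  exact Finset.sum_congr rfl fun y _ => by ring

/-- Soliton-type super Ricci flows from entropic curvature bounds. -/
theorem soliton_super_ricci_flow
    {X : Type*} [Fintype X] [DecidableEq X]
    (Q : X → X → ℝ) (pm : X → ℝ) (hM : IsMarkovTriple Q pm) (κ : ℝ)
    (hRic : ∀ μ : X → ℝ, IsProbPos μ → ∀ ψ : X → ℝ,
      gamma2Op Q pm μ ψ ≥ κ * gammaOp Q μ ψ) :
    ∀ t ∈ (if 0 < κ then Set.Ico (0:ℝ) (1/(2*κ)) else Set.Ici (0:ℝ)),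
      ∀ μ : X → ℝ, IsProbPos μ → ∀ ψ : X → ℝ,
        gamma2Op (fun x y => (1/(1 - 2*κ*t)) * Q x y) pm μ ψ ≥
          (1/2) * gammaDtOp (fun r x y => (1/(1 - 2*κ*r)) * Q x y) t μ ψ := by
  intro t ht μ hμ ψ
  have hd : 0 < 1 - 2*κ*t := by
    split_ifs at ht with hκ
    · obtain ⟨ht0, ht1⟩ := ht
      rw [lt_div_iff₀ (by positivity)] at ht1
      nlinarith
    · push_neg at hκ
      have ht0 : 0 ≤ t := ht
      nlinarith
  set L : ℝ := 1/(1 - 2*κ*t) with hLdef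
  have hL : 0 < L := by positivity
  obtain ⟨hμpos, hμsum⟩ := hμ
  have hQnn : ∀ x y, x ≠ y → 0 ≤ Q x y := hM.1
  -- scaling of gammaOp
  have hterm : ∀ x y : X, (ψ y - ψ x)^2 * logMean (μ x * (L * Q x y)) (μ y * (L * Q y x))
      = L * ((ψ y - ψ x)^2 * logMean (μ x * Q x y) (μ y * Q y x)) := by
    intro x y
    by_cases hxy : x = y
    · simp [hxy]
    · rw [logMean_mul_scale hL (hμpos x) (hμpos y) (hQnn x y hxy) (hQnn y x (Ne.symm hxy))]
      ring
  have hgamma : gammaOp (fun x y => L * Q x y) μ ψ = L * gammaOp Q μ ψ := by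
    simp only [gammaOp, hterm, ← Finset.mul_sum]
    ring
  -- scaling of gamma2Op
  have h2a : ∀ x y : X, (ψ y - ψ x)^2 *
      (logMeanD1 (μ x / pm x) (μ y / pm y) * (L * lapOp Q (fun z => μ z / pm z) x) +
        logMeanD2 (μ x / pm x) (μ y / pm y) * (L * lapOp Q (fun z => μ z / pm z) y)) *
      (L * Q x y) * pm x
      = L^2 * ((ψ y - ψ x)^2 *
        (logMeanD1 (μ x / pm x) (μ y / pm y) * lapOp Q (fun z => μ z / pm z) x +
          logMeanD2 (μ x / pm x) (μ y / pm y) * lapOp Q (fun z => μ z / pm z) y) *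
        Q x y * pm x) := fun x y => by ring
  have h2b : ∀ x y : X, (ψ y - ψ x) * (L * lapOp Q ψ y - L * lapOp Q ψ x) *
      logMean (μ x * (L * Q x y)) (μ y * (L * Q y x))
      = L^2 * ((ψ y - ψ x) * (lapOp Q ψ y - lapOp Q ψ x) *
        logMean (μ x * Q x y) (μ y * Q y x)) := by
    intro x y
    by_cases hxy : x = y
    · simp [hxy]
    · rw [logMean_mul_scale hL (hμpos x) (hμpos y) (hQnn x y hxy) (hQnn y x (Ne.symm hxy))]
      ring
  have hg2 : gamma2Op (fun x y => L * Q x y) pm μ ψ = L^2 * gamma2Op Q pm μ ψ := by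
    simp only [gamma2Op, lapOp_smul, h2a, h2b, ← Finset.mul_sum]
    ring
  -- derivative of the time factor
  have hderiv : ∀ c : ℝ, HasDerivAt (fun r : ℝ => 1/(1 - 2*κ*r) * c) (2*κ*L^2*c) t := by
    intro c
    have h1 : HasDerivAt (fun r : ℝ => 1 - 2*κ*r) (-(2*κ)) t := by
      simpa using ((hasDerivAt_id t).const_mul (2*κ)).const_sub 1
    have h2 := (h1.inv hd.ne').mul_const c
    have h3 : -(-(2*κ)) / (1 - 2*κ*t)^2 * c = 2*κ*L^2*c := by
      rw [hLdef]
      field_simp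
    simp only [one_div]
    rw [← h3]
    exact h2
  have hd' : ∀ c : ℝ, deriv (fun r : ℝ => 1/(1 - 2*κ*r) * c) t = 2*κ*L^2*c :=
    fun c => (hderiv c).deriv
  -- computation of gammaDtOp
  have hterm2 : ∀ x y : X, (ψ y - ψ x)^2 *
      (logMeanD1 (μ x * (L * Q x y)) (μ y * (L * Q y x)) * (μ x * (2*κ*L^2*Q x y)) +
        logMeanD2 (μ x * (L * Q x y)) (μ y * (L * Q y x)) * (μ y * (2*κ*L^2*Q y x)))
      = 2*κ*L * ((ψ y - ψ x)^2 * logMean (μ x * (L * Q x y)) (μ y * (L * Q y x))) := by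
    intro x y
    by_cases hxy : x = y
    · simp [hxy]
    · rcases (hQnn x y hxy).eq_or_lt with hq | hq
      · simp [← hq, logMean_zero_left, logMeanD2_zero_left]
      · rcases (hQnn y x (Ne.symm hxy)).eq_or_lt with hr | hr
        · simp [← hr, logMean_zero_right, logMeanD1_zero_right]
        · have ha' : 0 < μ x * (L * Q x y) := mul_pos (hμpos x) (mul_pos hL hq)
          have hb' : 0 < μ y * (L * Q y x) := mul_pos (hμpos y) (mul_pos hL hr)
          have he := euler_logMean ha' hb'
          rw [← he]
          ring
  have hDt : gammaDtOp (fun r x y => 1/(1 - 2*κ*r) * Q x y) t μ ψ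
      = 2*κ*L * gammaOp (fun x y => L * Q x y) μ ψ := by
    simp only [gammaDtOp, gammaOp, hd', ← hLdef]
    simp only [hterm2, ← Finset.mul_sum]
    ring
  rw [hg2, hDt, hgamma, ge_iff_le,
    show 1/2 * (2*κ*L * (L * gammaOp Q μ ψ)) = L^2 * (κ * gammaOp Q μ ψ) by ring]
  exact mul_le_mul_of_nonneg_left (hRic μ ⟨hμpos, hμsum⟩ ψ) (sq_nonneg L)
end
end
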